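/- If A is a nearly convex subset of a Euclidean space X, witnessed by a convex set C with C ⊆ A ⊆ closure C, then A ≈ closure A ≈ relative interior of A ≈ convex hull of A ≈ C. In particular, closure A and the relative interior of A are convex, and if A is nonempty then its relative interior is nonempty. -/

import Mathlib

variable {X : Type*} [NormedAddCommGroup X] [InnerProductSpace ℝ X] [FiniteDimensional ℝ X]

def NearlyEqual (A B : Set X) : Prop :=
  closure A = closure B ∧ intrinsicInterior ℝ A = intrinsicInterior ℝ B

def NearlyConvex (A : Set X) : Prop :=
  ∃ C : Set X, Convex ℝ C ∧ C ⊆ A ∧ A ⊆ closure C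


set_option linter.unusedSectionVars false

lemma mem_of_add_dir {s : AffineSubspace ℝ X} {z v : X} (hz : z ∈ s)
    (hv : v ∈ s.direction) : z + v ∈ s := by
  simpa [add_comm] using AffineSubspace.vadd_mem_of_mem_direction hv hz

lemma sub_mem_dir {s : AffineSubspace ℝ X} {x y : X} (hx : x ∈ s) (hy : y ∈ s) :
    x - y ∈ s.direction := AffineSubspace.vsub_mem_direction hx hy

lemma mem_ri_iff {s : Set X} {x : X} :
    x ∈ intrinsicInterior ℝ s ↔ x ∈ affineSpan ℝ s ∧
      ∃ ε > 0, ∀ y : X, y ∈ affineSpan ℝ s → dist y x < ε → y ∈ s := by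
  constructor
  · rintro ⟨y, hy, rfl⟩
    obtain ⟨ε, hε, hball⟩ := Metric.mem_nhds_iff.1 (mem_interior_iff_mem_nhds.1 hy)
    refine ⟨y.2, ε, hε, fun z hz hd => ?_⟩
    exact hball (show (⟨z, hz⟩ : affineSpan ℝ s) ∈ Metric.ball y ε by
      simpa [Metric.mem_ball, Subtype.dist_eq] using hd)
  · rintro ⟨hx, ε, hε, h⟩
    refine ⟨⟨x, hx⟩, ?_, rfl⟩
    rw [mem_interior_iff_mem_nhds, Metric.mem_nhds_iff]
    exact ⟨ε, hε, fun z hz => h z z.2 (by simpa [Metric.mem_ball, Subtype.dist_eq] using hz)⟩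

lemma span_between {C B : Set X} (hCB : C ⊆ B) (hBC : B ⊆ closure C) :
    affineSpan ℝ B = affineSpan ℝ C :=
  le_antisymm
    (affineSpan_le.2 (hBC.trans
      ((affineSpan ℝ C).closed_of_finiteDimensional.closure_subset_iff.2
        (subset_affineSpan ℝ C))))
    (affineSpan_mono ℝ hCB)

lemma convex_comb_mem_span {s : AffineSubspace ℝ X} {x z : X} (hx : x ∈ s) (hz : z ∈ s)
    {a b : ℝ} (hab : a + b = 1) : a • x + b • z ∈ s := by
  have h : a • x + b • z = z + a • (x - z) := by
    have hb : b = 1 - a := by linarith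
    rw [hb]; module
  rw [h]
  exact mem_of_add_dir hz (s.direction.smul_mem a (sub_mem_dir hx hz))

lemma ri_convex {C : Set X} (hC : Convex ℝ C) : Convex ℝ (intrinsicInterior ℝ C) := by
  intro x hx y hy a b ha hb hab
  rw [mem_ri_iff] at hx hy ⊢
  obtain ⟨hxs, ε₁, hε₁, h₁⟩ := hx
  obtain ⟨hys, ε₂, hε₂, h₂⟩ := hy
  refine ⟨convex_comb_mem_span hxs hys hab, min ε₁ ε₂, lt_min hε₁ hε₂, fun p hp hd => ?_⟩
  set u := p - (a • x + b • y) with hu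
  have hux : x + u ∈ C := by
    refine h₁ _ (mem_of_add_dir hxs ?_) ?_
    · exact sub_mem_dir hp (convex_comb_mem_span hxs hys hab)
    · simpa [dist_eq_norm, hu] using (lt_min_iff.1 (by simpa [dist_eq_norm, hu] using hd)).1
  have huy : y + u ∈ C := by
    refine h₂ _ (mem_of_add_dir hys ?_) ?_
    · exact sub_mem_dir hp (convex_comb_mem_span hxs hys hab)
    · simpa [dist_eq_norm, hu] using (lt_min_iff.1 (by simpa [dist_eq_norm, hu] using hd)).2
  have : p = a • (x + u) + b • (y + u) := by
    rw [hu]; match_scalars <;> nlinarith [hab]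
  rw [this]
  exact hC hux huy ha hb hab

lemma ri_between {C B : Set X} (hC : Convex ℝ C) (hCB : C ⊆ B) (hBC : B ⊆ closure C) :
    intrinsicInterior ℝ B = intrinsicInterior ℝ C := by
  have hspan : affineSpan ℝ B = affineSpan ℝ C := span_between hCB hBC
  apply subset_antisymm
  · intro x hx
    rw [mem_ri_iff] at hx ⊢
    obtain ⟨hxspan, ε, hε, hball⟩ := hx
    rw [hspan] at hxspan
    have hball' : ∀ y : X, y ∈ affineSpan ℝ C → dist y x < ε → y ∈ B := by
      intro y hy; exact hball y (by rwa [hspan])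
    have hxB : x ∈ B := hball' x hxspan (by simp [hε])
    have hCne : C.Nonempty := closure_nonempty_iff.1 ⟨x, hBC hxB⟩
    obtain ⟨z, hz⟩ := Set.Nonempty.intrinsicInterior hC hCne
    rw [mem_ri_iff] at hz
    obtain ⟨hzspan, δ, hδ, hzball⟩ := hz
    set r := dist x z with hr
    have hr0 : 0 ≤ r := dist_nonneg
    set t : ℝ := ε / (2 * (r + 1)) with ht
    have htpos : 0 < t := by positivity
    set w := x + t • (x - z) with hw
    have hwspan : w ∈ affineSpan ℝ C :=
      mem_of_add_dir hxspan ((affineSpan ℝ C).direction.smul_mem t (sub_mem_dir hxspan hzspan))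
    have hwd : dist w x < ε := by
      have h1 : dist w x = t * r := by
        rw [hw, dist_eq_norm]
        simp [norm_smul, abs_of_pos htpos, hr, dist_eq_norm]
      have h2 : t * (r + 1) = ε / 2 := by
        rw [ht]; field_simp
      nlinarith
    have hwcl : w ∈ closure C := hBC (hball' w hwspan hwd)
    set a : ℝ := 1 / (1 + t) with ha
    set b : ℝ := t / (1 + t) with hb
    have h1t : (0:ℝ) < 1 + t := by linarith
    have hapos : 0 < a := by positivity
    have hbpos : 0 < b := by positivity
    have hab : a + b = 1 := by rw [ha, hb]; field_simp
    have hx_eq : x = a • w + b • z := by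
      rw [hw, ha, hb]; match_scalars <;> (field_simp; try ring)
    obtain ⟨w', hw'C, hw'd⟩ := Metric.mem_closure_iff.1 hwcl (b * δ / (2 * a)) (by positivity)
    refine ⟨hxspan, b * δ / 2, by positivity, fun y hy hd => ?_⟩
    set z' := z + ((1/b) • (y - x) + (a/b) • (w - w')) with hz'
    have hz'span : z' ∈ affineSpan ℝ C := by
      refine mem_of_add_dir hzspan (Submodule.add_mem _ ?_ ?_)
      · exact Submodule.smul_mem _ _ (sub_mem_dir hy hxspan)
      · exact Submodule.smul_mem _ _ (sub_mem_dir hwspan (subset_affineSpan ℝ C hw'C))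
    have hz'C : z' ∈ C := by
      refine hzball z' hz'span ?_
      have hdist : dist z' z = ‖(1/b) • (y - x) + (a/b) • (w - w')‖ := by
        rw [hz', dist_eq_norm]; ring_nf
        congr 1; abel
      have hnorm : ‖(1/b) • (y - x) + (a/b) • (w - w')‖ ≤
          (1/b) * ‖y - x‖ + (a/b) * ‖w - w'‖ := by
        refine (norm_add_le _ _).trans ?_
        rw [norm_smul, norm_smul, Real.norm_eq_abs, Real.norm_eq_abs,
          abs_of_pos (by positivity), abs_of_pos (by positivity)]
      have h1 : ‖y - x‖ < b * δ / 2 := by rwa [← dist_eq_norm]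
      have h2 : ‖w - w'‖ < b * δ / (2 * a) := by
        rw [← dist_eq_norm]; exact hw'd
      rw [hdist]
      calc ‖(1/b) • (y - x) + (a/b) • (w - w')‖
          ≤ (1/b) * ‖y - x‖ + (a/b) * ‖w - w'‖ := hnorm
        _ < (1/b) * (b * δ / 2) + (a/b) * (b * δ / (2 * a)) := by
            apply add_lt_add
            · exact mul_lt_mul_of_pos_left h1 (by positivity)
            · exact mul_lt_mul_of_pos_left h2 (by positivity)
        _ = δ := by field_simp; ring
    have hy_eq : y = a • w' + b • z' := by
      have key : a • w' + b • z' = (a • w + b • z) + (y - x) := by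
        rw [hz']; match_scalars <;> (field_simp; try ring)
      rw [key, ← hx_eq]; abel
    rw [hy_eq]
    exact hC hw'C hz'C hapos.le hbpos.le hab
  · intro x hx
    rw [mem_ri_iff] at hx ⊢
    obtain ⟨hxspan, ε, hε, hball⟩ := hx
    rw [← hspan] at hxspan
    exact ⟨hxspan, ε, hε, fun y hy hd => hCB (hball y (by rwa [hspan] at hy) hd)⟩

lemma closure_ri {C : Set X} (hC : Convex ℝ C) :
    closure (intrinsicInterior ℝ C) = closure C := by
  refine subset_antisymm (closure_mono intrinsicInterior_subset) ?_
  refine closure_minimal (fun x hx => ?_) isClosed_closure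
  have hCne : C.Nonempty := ⟨x, hx⟩
  obtain ⟨z, hz⟩ := Set.Nonempty.intrinsicInterior hC hCne
  rw [mem_ri_iff] at hz
  obtain ⟨hzspan, δ, hδ, hzball⟩ := hz
  have hxspan : x ∈ affineSpan ℝ C := subset_affineSpan ℝ C hx
  rw [Metric.mem_closure_iff]
  intro ε hε
  set d := dist z x with hdd
  have hd0 : (0:ℝ) ≤ d := dist_nonneg
  set s : ℝ := min 1 (ε / (2 * (d + 1))) with hs
  have hspos : 0 < s := lt_min one_pos (by positivity)
  have hs1 : s ≤ 1 := min_le_left _ _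
  set y := x + s • (z - x) with hy
  refine ⟨y, ?_, ?_⟩
  · rw [mem_ri_iff]
    have hyspan : y ∈ affineSpan ℝ C :=
      mem_of_add_dir hxspan ((affineSpan ℝ C).direction.smul_mem s (sub_mem_dir hzspan hxspan))
    refine ⟨hyspan, s * δ, by positivity, fun p hp hdp => ?_⟩
    have hq : z + (1/s) • (p - y) ∈ C := by
      refine hzball _ (mem_of_add_dir hzspan
        (Submodule.smul_mem _ _ (sub_mem_dir hp hyspan))) ?_
      have : dist (z + (1/s) • (p - y)) z = (1/s) * ‖p - y‖ := by
        rw [dist_eq_norm, add_sub_cancel_left, norm_smul, Real.norm_eq_abs,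
          abs_of_pos (show (0:ℝ) < 1/s by positivity)]
      rw [this]
      have hpy : ‖p - y‖ < s * δ := by rwa [← dist_eq_norm]
      calc (1/s) * ‖p - y‖ < (1/s) * (s * δ) := by
            exact mul_lt_mul_of_pos_left hpy (by positivity)
        _ = δ := by field_simp
    have hp_eq : p = (1 - s) • x + s • (z + (1/s) • (p - y)) := by
      rw [hy]; match_scalars <;> (field_simp; try ring)
    rw [hp_eq]
    exact hC hx hq (by linarith) hspos.le (by ring)
  · have : dist x y = s * d := by
      rw [hy, dist_eq_norm, hdd, dist_eq_norm]
      simp [norm_smul, abs_of_pos hspos, norm_sub_rev (z) (x)]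
    rw [this]
    have h2 : s ≤ ε / (2 * (d + 1)) := min_le_right _ _
    have : s * (d + 1) ≤ ε / 2 := by
      rw [le_div_iff₀ (by positivity)] at h2
      nlinarith
    nlinarith

theorem nearlyConvex_nearlyEqual (A C : Set X) (hC : Convex ℝ C)
    (hCA : C ⊆ A) (hAC : A ⊆ closure C) :
    NearlyEqual A (closure A) ∧ NearlyEqual A (intrinsicInterior ℝ A) ∧
    NearlyEqual A (convexHull ℝ A) ∧
    NearlyEqual A (intrinsicInterior ℝ (convexHull ℝ A)) ∧ NearlyEqual A C ∧
    Convex ℝ (closure A) ∧ Convex ℝ (intrinsicInterior ℝ A) ∧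
    (A.Nonempty → (intrinsicInterior ℝ A).Nonempty) := by
  have hclAC : closure A = closure C :=
    subset_antisymm (closure_minimal hAC isClosed_closure) (closure_mono hCA)
  have hriAC : intrinsicInterior ℝ A = intrinsicInterior ℝ C := ri_between hC hCA hAC
  have hhull1 : C ⊆ convexHull ℝ A := hCA.trans (subset_convexHull ℝ A)
  have hhull2 : convexHull ℝ A ⊆ closure C := convexHull_min hAC hC.closure
  have hclHull : closure (convexHull ℝ A) = closure C :=
    subset_antisymm (closure_minimal hhull2 isClosed_closure) (closure_mono hhull1)
  have hriHull : intrinsicInterior ℝ (convexHull ℝ A) = intrinsicInterior ℝ C :=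
    ri_between hC hhull1 hhull2
  have hriClA : intrinsicInterior ℝ (closure A) = intrinsicInterior ℝ C :=
    ri_between hC (hCA.trans subset_closure) hclAC.le
  have hclRiC : closure (intrinsicInterior ℝ C) = closure C := closure_ri hC
  have hriri : intrinsicInterior ℝ C = intrinsicInterior ℝ (intrinsicInterior ℝ C) :=
    ri_between (ri_convex hC) intrinsicInterior_subset
      (by rw [hclRiC]; exact subset_closure)
  refine ⟨⟨closure_closure.symm, hriAC.trans hriClA.symm⟩,
    ⟨by rw [hriAC, hclRiC, hclAC], by rw [hriAC, ← hriri]⟩,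
    ⟨hclAC.trans hclHull.symm, hriAC.trans hriHull.symm⟩,
    ⟨by rw [hriHull, hclRiC]; exact hclAC, by rw [hriHull, ← hriri]; exact hriAC⟩,
    ⟨hclAC, hriAC⟩, hclAC ▸ hC.closure, hriAC ▸ ri_convex hC, fun ⟨a, ha⟩ => ?_⟩
  rw [hriAC]
  exact Set.Nonempty.intrinsicInterior hC (closure_nonempty_iff.1 ⟨a, hAC ha⟩)
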